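/- Let K be an infinite field and F a nonempty lower filter of partitions of n under dominance order. Then the Specht ideal I_F = Σ_{λ ∈ F} I_λ equals the vanishing ideal J_{P_n \ F} of the set of points whose orbit type is not in F; in particular, I_F is a radical (reduced) ideal. -/

import Mathlib

open MvPolynomial

/-- `l` is a partition of `n`: non-increasing list of positive integers summing to `n`. -/
def IsPartitionList (n : ℕ) (l : List ℕ) : Prop :=
  l.Pairwise (· ≥ ·) ∧ (∀ x ∈ l, 0 < x) ∧ l.sum = n

/-- Dominance order: `l ⊵ m` iff every partial sum of `m` is at most that of `l`. -/
def Dominates (l m : List ℕ) : Prop :=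
  ∀ k : ℕ, (m.take k).sum ≤ (l.take k).sum

/-- `T` is a (bijective) tableau of shape `l`, sending each entry in `Fin n` to its
cell `(row, column)` (0-indexed) of the Young diagram of `l`. -/
def IsTableau (n : ℕ) (l : List ℕ) (T : Fin n → ℕ × ℕ) : Prop :=
  Function.Injective T ∧
    ∀ p : ℕ × ℕ, p ∈ Set.range T ↔ p.1 < l.length ∧ p.2 < l.getD p.1 0

/-- The Specht polynomial of a tableau: product of `x i - x j` over pairs `i, j`
in the same column with `j` strictly below `i`. -/
noncomputable def spechtPoly (n : ℕ) (K : Type*) [Field K] (T : Fin n → ℕ × ℕ) :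
    MvPolynomial (Fin n) K :=
  ∏ p ∈ Finset.univ.filter
      (fun p : Fin n × Fin n => (T p.1).2 = (T p.2).2 ∧ (T p.1).1 < (T p.2).1),
    (X p.1 - X p.2)

/-- The multiplicity of the value `v` among the coordinates of `a`. -/
noncomputable def mult {K : Type*} {n : ℕ} (a : Fin n → K) (v : K) : ℕ :=
  {i | a i = v}.ncard

/-- `a ∈ K^n` has orbit type `l`: the multiplicities of the distinct coordinate
values of `a`, listed in non-increasing order, form the list `l`. -/
def HasOrbitType {K : Type*} {n : ℕ} (a : Fin n → K) (l : List ℕ) : Prop :=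
  l.Pairwise (· ≥ ·) ∧
    ∃ α : Fin l.length → K, Function.Injective α ∧
      (∀ i, ∃ j, a i = α j) ∧ ∀ j : Fin l.length, mult a (α j) = l.get j

/-- `λ + ⟨k⟩` (1-indexed `k`): add one box to the `k`-th part and re-sort
non-increasingly; append a part `1` if `k` exceeds the length. -/
def addBox (l : List ℕ) (k : ℕ) : List ℕ :=
  if k ≤ l.length then
    ((↑(l.set (k - 1) (l.getD (k - 1) 0 + 1)) : Multiset ℕ).sort (· ≤ ·)).reverse
  else l ++ [1]

/-- `F` is an upper filter of partitions of `n` for the dominance order. -/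
def IsUpperFilter (n : ℕ) (F : Set (List ℕ)) : Prop :=
  (∀ l ∈ F, IsPartitionList n l) ∧
    ∀ l m : List ℕ, IsPartitionList n l → m ∈ F → Dominates l m → l ∈ F

/-- `F` is a lower filter of partitions of `n` for the dominance order. -/
def IsLowerFilter (n : ℕ) (F : Set (List ℕ)) : Prop :=
  (∀ l ∈ F, IsPartitionList n l) ∧
    ∀ l m : List ℕ, IsPartitionList n m → l ∈ F → Dominates l m → m ∈ F

/-- Lexicographic order on exponent vectors with `x 0 < x 1 < ⋯ < x (n-1)`. -/
def lexLt {n : ℕ} (a b : Fin n →₀ ℕ) : Prop :=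
  ∃ i, a i < b i ∧ ∀ j, i < j → a j = b j

/-- `m` is the initial (leading) monomial of `f` w.r.t. the strict order `lt`. -/
def IsInitialMon {K : Type*} [CommRing K] {n : ℕ}
    (lt : (Fin n →₀ ℕ) → (Fin n →₀ ℕ) → Prop)
    (f : MvPolynomial (Fin n) K) (m : Fin n →₀ ℕ) : Prop :=
  m ∈ f.support ∧ ∀ m' ∈ f.support, m' ≠ m → lt m' m

/-- The Specht ideal of shape `l`. -/
noncomputable def spechtIdeal (n : ℕ) (K : Type*) [Field K] (l : List ℕ) :
    Ideal (MvPolynomial (Fin n) K) :=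
  Ideal.span { f | ∃ T : Fin n → ℕ × ℕ, IsTableau n l T ∧ f = spechtPoly n K T }

/-- The Specht ideal of a family `F` of partitions: `Σ_{λ ∈ F} I_λ`. -/
noncomputable def spechtIdealFilter (n : ℕ) (K : Type*) [Field K] (F : Set (List ℕ)) :
    Ideal (MvPolynomial (Fin n) K) :=
  Ideal.span { f | ∃ l ∈ F, ∃ T : Fin n → ℕ × ℕ, IsTableau n l T ∧ f = spechtPoly n K T }

/-- A monomial order on `K[x_1,…,x_n]`, given as a strict linear order on the
exponent vectors compatible with addition and with `0` minimal. -/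
structure MonOrder (n : ℕ) where
  lt : (Fin n →₀ ℕ) → (Fin n →₀ ℕ) → Prop
  trichot : ∀ a b, lt a b ∨ a = b ∨ lt b a
  irrefl : ∀ a, ¬ lt a a
  trans' : ∀ a b c, lt a b → lt b c → lt a c
  zero_lt : ∀ a, a ≠ 0 → lt 0 a
  add_right : ∀ a b c, lt a b → lt (a + c) (b + c)

set_option maxHeartbeats 1000000

def IsInitialMon' {K : Type*} [CommRing K] {n : ℕ}
    (lt : (Fin n →₀ ℕ) → (Fin n →₀ ℕ) → Prop)
    (f : MvPolynomial (Fin n) K) (m : Fin n →₀ ℕ) : Prop :=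
  m ∈ f.support ∧ ∀ m' ∈ f.support, m' ≠ m → lt m' m

namespace SpechtAux

attribute [local instance 10] Classical.propDecidable

/-- Lexicographic order with the most significant variable at index `0`. -/
def mLt {n : ℕ} (a b : Fin n →₀ ℕ) : Prop :=
  ∃ i, a i < b i ∧ ∀ j, j < i → a j = b j

theorem mLt_irrefl {n : ℕ} (a : Fin n →₀ ℕ) : ¬ mLt a a := by
  rintro ⟨i, hi, -⟩; exact lt_irrefl _ hi

theorem mLt_trans {n : ℕ} {a b c : Fin n →₀ ℕ} (h1 : mLt a b) (h2 : mLt b c) : mLt a c := by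
  obtain ⟨i, hi, hji⟩ := h1
  obtain ⟨i', hi', hji'⟩ := h2
  rcases lt_trichotomy i i' with h | h | h
  · exact ⟨i, (hji' i h) ▸ hi, fun j hj => (hji j hj).trans (hji' j (hj.trans h))⟩
  · subst h; exact ⟨i, hi.trans hi', fun j hj => (hji j hj).trans (hji' j hj)⟩
  · exact ⟨i', (hji i' h).symm ▸ hi', fun j hj => (hji j (hj.trans h)).trans (hji' j hj)⟩

theorem mLt_trichot {n : ℕ} (a b : Fin n →₀ ℕ) : mLt a b ∨ a = b ∨ mLt b a := by
  classical
  by_cases hab : a = b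
  · exact Or.inr (Or.inl hab)
  · have hne : (Finset.univ.filter (fun i : Fin n => a i ≠ b i)).Nonempty := by
      by_contra h
      apply hab
      ext i
      by_contra hi
      exact h ⟨i, Finset.mem_filter.2 ⟨Finset.mem_univ _, hi⟩⟩
    set s := Finset.univ.filter (fun i : Fin n => a i ≠ b i)
    have h0 : s.min' hne ∈ s := Finset.min'_mem _ _
    set i0 := s.min' hne
    have hlt : ∀ j, j < i0 → a j = b j := by
      intro j hj
      by_contra hja
      exact absurd (Finset.min'_le s j (Finset.mem_filter.2 ⟨Finset.mem_univ _, hja⟩))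
        (not_le.2 hj)
    have hne0 : a i0 ≠ b i0 := (Finset.mem_filter.1 h0).2
    rcases lt_or_gt_of_ne hne0 with h | h
    · exact Or.inl ⟨i0, h, hlt⟩
    · exact Or.inr (Or.inr ⟨i0, h, fun j hj => (hlt j hj).symm⟩)

theorem mLt_add_right {n : ℕ} {a b : Fin n →₀ ℕ} (c : Fin n →₀ ℕ) (h : mLt a b) :
    mLt (a + c) (b + c) := by
  obtain ⟨i, hi, hji⟩ := h
  exact ⟨i, by simpa using hi, fun j hj => by simpa using hji j hj⟩

/-- `a` equals `b` or is lex-smaller. -/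
def mLe {n : ℕ} (a b : Fin n →₀ ℕ) : Prop := a = b ∨ mLt a b

theorem mLt_add_of_le_of_le {n : ℕ} {p q m m' : Fin n →₀ ℕ} (hp : mLe p m) (hq : mLe q m')
    (hne : ¬(p = m ∧ q = m')) : mLt (p + q) (m + m') := by
  rcases hp with rfl | hp
  · rcases hq with rfl | hq
    · exact absurd ⟨rfl, rfl⟩ hne
    · have := mLt_add_right p hq
      simpa [add_comm] using this
  · rcases hq with rfl | hq
    · exact mLt_add_right q hp
    · exact mLt_trans (mLt_add_right q hp) (by simpa [add_comm] using mLt_add_right m hq)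

/-- existence of a maximum of a nonempty finset w.r.t. `mLt`. -/
theorem exists_mLt_max {n : ℕ} (s : Finset (Fin n →₀ ℕ)) (hs : s.Nonempty) :
    ∃ m ∈ s, ∀ x ∈ s, x ≠ m → mLt x m := by
  classical
  induction s using Finset.induction_on with
  | empty => exact absurd hs (by simp)
  | @insert a s ha ih =>
    rcases s.eq_empty_or_nonempty with rfl | hs'
    · exact ⟨a, by simp, by simp⟩
    · obtain ⟨m, hm, hmax⟩ := ih hs'
      rcases mLt_trichot a m with h | h | h
      · refine ⟨m, Finset.mem_insert_of_mem hm, ?_⟩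
        intro x hx hxm
        rcases Finset.mem_insert.1 hx with rfl | hx
        · exact h
        · exact hmax x hx hxm
      · subst h
        exact ⟨a, Finset.mem_insert_self _ _, fun x hx hxm =>
          hmax x (Finset.mem_insert.1 hx |>.resolve_left hxm) hxm⟩
      · refine ⟨a, Finset.mem_insert_self _ _, ?_⟩
        intro x hx hxa
        rcases Finset.mem_insert.1 hx with rfl | hx
        · exact absurd rfl hxa
        · rcases eq_or_ne x m with rfl | hxm
          · exact h
          · exact mLt_trans (hmax x hx hxm) h

variable {K : Type*} [Field K] {n : ℕ}

theorem exists_initMon {f : MvPolynomial (Fin n) K} (hf : f ≠ 0) :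
    ∃ m, IsInitialMon' mLt f m := by
  obtain ⟨m, hm, hmax⟩ := exists_mLt_max f.support (by simpa using hf)
  exact ⟨m, hm, hmax⟩

theorem initMon_mul {f g : MvPolynomial (Fin n) K} {m m' : Fin n →₀ ℕ}
    (hf : IsInitialMon' mLt f m) (hg : IsInitialMon' mLt g m') :
    IsInitialMon' mLt (f * g) (m + m') ∧
      MvPolynomial.coeff (m + m') (f * g) = MvPolynomial.coeff m f * MvPolynomial.coeff m' g := by
  classical
  have hle : ∀ p ∈ f.support, mLe p m := by
    intro p hp; rcases eq_or_ne p m with rfl | h; exact Or.inl rfl; exact Or.inr (hf.2 p hp h)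
  have hle' : ∀ q ∈ g.support, mLe q m' := by
    intro q hq; rcases eq_or_ne q m' with rfl | h; exact Or.inl rfl; exact Or.inr (hg.2 q hq h)
  have hco : MvPolynomial.coeff (m + m') (f * g)
      = MvPolynomial.coeff m f * MvPolynomial.coeff m' g := by
    rw [MvPolynomial.coeff_mul]
    have hmem : (m, m') ∈ Finset.HasAntidiagonal.antidiagonal (m + m') := Finset.HasAntidiagonal.mem_antidiagonal.2 rfl
    rw [Finset.sum_eq_single_of_mem (m, m') hmem]
    intro b hb hne
    have h : b.1 + b.2 = m + m' := Finset.HasAntidiagonal.mem_antidiagonal.1 hb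
    by_cases hb1 : b.1 ∈ f.support
    · by_cases hb2 : b.2 ∈ g.support
      · exfalso
        have hmm : mLt (b.1 + b.2) (m + m') := by
          apply mLt_add_of_le_of_le (hle _ hb1) (hle' _ hb2)
          intro hpq
          exact hne (Prod.ext hpq.1 hpq.2)
        rw [h] at hmm
        exact mLt_irrefl _ hmm
      · rw [MvPolynomial.notMem_support_iff.1 hb2, mul_zero]
    · rw [MvPolynomial.notMem_support_iff.1 hb1, zero_mul]
  have hnz : MvPolynomial.coeff m f * MvPolynomial.coeff m' g ≠ 0 :=
    mul_ne_zero (MvPolynomial.mem_support_iff.1 hf.1) (MvPolynomial.mem_support_iff.1 hg.1)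
  refine ⟨⟨MvPolynomial.mem_support_iff.2 (by rw [hco]; exact hnz), ?_⟩, hco⟩
  intro γ hγ hne
  have := MvPolynomial.support_mul f g hγ
  rw [Finset.mem_add] at this
  obtain ⟨p, hp, q, hq, rfl⟩ := this
  apply mLt_add_of_le_of_le (hle p hp) (hle' q hq)
  rintro ⟨rfl, rfl⟩
  exact hne rfl

theorem initMon_monomial {δ : Fin n →₀ ℕ} {c : K} (hc : c ≠ 0) :
    IsInitialMon' mLt (MvPolynomial.monomial δ c) δ := by
  constructor
  · rw [MvPolynomial.mem_support_iff, MvPolynomial.coeff_monomial, if_pos rfl]; exact hc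
  · intro m' hm' hne
    rw [MvPolynomial.mem_support_iff, MvPolynomial.coeff_monomial] at hm'
    rw [if_neg (fun h => hne h.symm)] at hm'
    exact absurd rfl hm'

theorem initMon_one : IsInitialMon' mLt (1 : MvPolynomial (Fin n) K) 0 := by
  have h := initMon_monomial (n := n) (δ := 0) (c := (1 : K)) one_ne_zero
  rwa [MvPolynomial.monomial_zero', MvPolynomial.C_1] at h

theorem initMon_prod {ι : Type*} (s : Finset ι) (g : ι → MvPolynomial (Fin n) K)
    (m : ι → (Fin n →₀ ℕ)) (h : ∀ i ∈ s, IsInitialMon' mLt (g i) (m i)) :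
    IsInitialMon' mLt (∏ i ∈ s, g i) (∑ i ∈ s, m i) ∧
      MvPolynomial.coeff (∑ i ∈ s, m i) (∏ i ∈ s, g i) = ∏ i ∈ s, MvPolynomial.coeff (m i) (g i) := by
  classical
  induction s using Finset.induction_on with
  | empty =>
    rw [Finset.prod_empty, Finset.sum_empty]
    exact ⟨initMon_one, by simp⟩
  | @insert a s ha ih =>
    have hih := ih (fun i hi => h i (Finset.mem_insert_of_mem hi))
    have ha' := h a (Finset.mem_insert_self _ _)
    rw [Finset.prod_insert ha, Finset.sum_insert ha]
    obtain ⟨h1, h2⟩ := initMon_mul ha' hih.1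
    exact ⟨h1, by rw [h2, hih.2, Finset.prod_insert ha]⟩

theorem initMon_X_sub {i j : Fin n} (hij : i ≠ j) :
    IsInitialMon' mLt ((X i - X j : MvPolynomial (Fin n) K))
      (Finsupp.single (if i < j then i else j) 1) := by
  classical
  have hsingle : (Finsupp.single i 1 : Fin n →₀ ℕ) ≠ Finsupp.single j 1 := by
    intro h
    have h2 := DFunLike.congr_fun h i
    simp [Finsupp.single_apply, Ne.symm hij] at h2
  have hcoeffi : ∀ γ, MvPolynomial.coeff γ (X i - X j : MvPolynomial (Fin n) K)
      = (if γ = Finsupp.single i 1 then (1:K) else 0) - (if γ = Finsupp.single j 1 then 1 else 0) := by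
    intro γ
    rw [MvPolynomial.coeff_sub, MvPolynomial.X, MvPolynomial.coeff_monomial,
      MvPolynomial.X, MvPolynomial.coeff_monomial]
    simp only [eq_comm]
  have hmm : ∀ (u v : Fin n), u < v →
      mLt (Finsupp.single v 1) (Finsupp.single u 1) := by
    intro u v huv
    refine ⟨u, ?_, ?_⟩
    · simp [Finsupp.single_apply, (ne_of_lt huv).symm]
    · intro k hk
      have h1 : k ≠ u := ne_of_lt hk
      have h2 : k ≠ v := ne_of_lt (hk.trans huv)
      simp [Finsupp.single_apply, h1.symm, h2.symm]
  constructor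
  · rw [MvPolynomial.mem_support_iff, hcoeffi]
    by_cases h : i < j
    · rw [if_pos h, if_pos rfl, if_neg (by simpa using hsingle)]; norm_num
    · rw [if_neg h, if_neg (by simpa using hsingle.symm), if_pos rfl]; norm_num
  · intro γ hγ hne
    rw [MvPolynomial.mem_support_iff, hcoeffi] at hγ
    by_cases h1 : γ = Finsupp.single i 1
    · subst h1
      by_cases h : i < j
      · exact absurd (by rw [if_pos h]) hne
      · rw [if_neg h] at hne ⊢
        exact hmm j i (lt_of_le_of_ne (not_lt.1 h) hij.symm)
    · by_cases h2 : γ = Finsupp.single j 1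
      · subst h2
        by_cases h : i < j
        · rw [if_pos h] at hne ⊢; exact hmm i j h
        · exact absurd (by rw [if_neg h]) hne
      · rw [if_neg h1, if_neg h2] at hγ; simpa using hγ

section Frank

open Finset

variable {K : Type*} {n : ℕ}

/-- number of indices `j` after `i` (i.e. `i < j`) with the same value. -/
noncomputable def frank (a : Fin n → K) (i : Fin n) : ℕ :=
  (Finset.univ.filter (fun j => i < j ∧ a j = a i)).card

/-- number of indices `j` after `i` with the same `frank`. -/
noncomputable def crank (a : Fin n → K) (i : Fin n) : ℕ :=
  (Finset.univ.filter (fun j => i < j ∧ frank a j = frank a i)).card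

/-- multiplicity as a Finset card. -/
noncomputable def multF (a : Fin n → K) (v : K) : ℕ :=
  (Finset.univ.filter (fun j => a j = v)).card

theorem mult_eq_multF (a : Fin n → K) (v : K) : mult a v = multF a v := by
  classical
  rw [mult, multF]
  rw [show {i | a i = v} = ((Finset.univ.filter (fun j => a j = v) : Finset (Fin n)) : Set (Fin n)) by
    ext i; simp]
  rw [Set.ncard_coe_finset]

theorem card_filter_succ {n : ℕ} (i : Fin n) (Q : Fin (n + 1) → Prop) (R : Fin n → Prop)
    [DecidablePred Q] [DecidablePred R]
    (h : ∀ j : Fin n, Q j.succ ↔ R j) :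
    (Finset.univ.filter (fun j : Fin (n + 1) => i.succ < j ∧ Q j)).card
      = (Finset.univ.filter (fun j : Fin n => i < j ∧ R j)).card := by
  classical
  symm
  apply Finset.card_bij (fun (j : Fin n) _ => j.succ)
  · intro j hj
    obtain ⟨-, h1, h2⟩ := Finset.mem_filter.1 hj
    exact Finset.mem_filter.2 ⟨Finset.mem_univ _, Fin.succ_lt_succ_iff.2 h1, (h j).2 h2⟩
  · intro u hu v hv huv
    exact Fin.succ_injective _ huv
  · intro b hb
    obtain ⟨-, h1, h2⟩ := Finset.mem_filter.1 hb
    have hb0 : b ≠ 0 := by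
      intro hh; subst hh
      exact absurd h1 (by simp [Fin.lt_iff_val_lt_val])
    obtain ⟨c, rfl⟩ := Fin.eq_succ_of_ne_zero hb0
    exact ⟨c, Finset.mem_filter.2 ⟨Finset.mem_univ _, Fin.succ_lt_succ_iff.1 h1, (h c).1 h2⟩, rfl⟩

theorem card_filter_zero {n : ℕ} (Q : Fin (n + 1) → Prop) (R : Fin n → Prop)
    [DecidablePred Q] [DecidablePred R]
    (h : ∀ j : Fin n, Q j.succ ↔ R j) :
    (Finset.univ.filter (fun j : Fin (n + 1) => 0 < j ∧ Q j)).card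
      = (Finset.univ.filter (fun j : Fin n => R j)).card := by
  classical
  symm
  apply Finset.card_bij (fun (j : Fin n) _ => j.succ)
  · intro j hj
    obtain ⟨-, h2⟩ := Finset.mem_filter.1 hj
    exact Finset.mem_filter.2 ⟨Finset.mem_univ _, Fin.succ_pos _, (h j).2 h2⟩
  · intro u hu v hv huv
    exact Fin.succ_injective _ huv
  · intro b hb
    obtain ⟨-, h1, h2⟩ := Finset.mem_filter.1 hb
    have hb0 : b ≠ 0 := by
      intro hh; subst hh; exact absurd h1 (lt_irrefl _)
    obtain ⟨c, rfl⟩ := Fin.eq_succ_of_ne_zero hb0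
    exact ⟨c, Finset.mem_filter.2 ⟨Finset.mem_univ _, (h c).1 h2⟩, rfl⟩

theorem frank_cons_succ (a : Fin n → K) (v : K) (i : Fin n) :
    frank (Fin.cons v a) i.succ = frank a i := by
  rw [frank, frank]
  apply card_filter_succ
  intro j
  rw [Fin.cons_succ, Fin.cons_succ]

theorem frank_cons_zero (a : Fin n → K) (v : K) :
    frank (Fin.cons v a) 0 = multF a v := by
  rw [frank, multF]
  apply card_filter_zero
  intro j
  rw [Fin.cons_succ, Fin.cons_zero]

theorem crank_cons_succ (a : Fin n → K) (v : K) (i : Fin n) :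
    crank (Fin.cons v a) i.succ = crank a i := by
  rw [crank, crank]
  apply card_filter_succ
  intro j
  rw [frank_cons_succ, frank_cons_succ]

theorem crank_cons_zero (a : Fin n → K) (v : K) :
    crank (Fin.cons v a) 0
      = (Finset.univ.filter (fun j : Fin n => frank a j = multF a v)).card := by
  rw [crank]
  apply card_filter_zero
  intro j
  rw [frank_cons_succ, frank_cons_zero]

theorem frank_lt_multF (a : Fin n → K) (i : Fin n) : frank a i < multF a (a i) := by
  have hmem : i ∈ Finset.univ.filter (fun j => a j = a i) :=
    Finset.mem_filter.2 ⟨Finset.mem_univ _, rfl⟩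
  have hsub : (Finset.univ.filter (fun j => i < j ∧ a j = a i))
      ⊆ (Finset.univ.filter (fun j => a j = a i)).erase i := by
    intro j hj
    obtain ⟨-, h1, h2⟩ := Finset.mem_filter.1 hj
    exact Finset.mem_erase.2 ⟨ne_of_gt h1, Finset.mem_filter.2 ⟨Finset.mem_univ _, h2⟩⟩
  have hle := Finset.card_le_card hsub
  have herase := Finset.card_erase_of_mem hmem
  have hpos : 0 < (Finset.univ.filter (fun j => a j = a i)).card :=
    Finset.card_pos.2 ⟨i, hmem⟩
  rw [frank, multF]
  omega

theorem frank_anti (a : Fin n → K) {i j : Fin n} (hij : i < j) (hval : a i = a j) :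
    frank a j < frank a i := by
  have hnotmem : j ∉ (Finset.univ.filter (fun k => j < k ∧ a k = a j)) := by
    intro h; exact absurd (Finset.mem_filter.1 h).2.1 (lt_irrefl _)
  have hsub : insert j (Finset.univ.filter (fun k => j < k ∧ a k = a j))
      ⊆ Finset.univ.filter (fun k => i < k ∧ a k = a i) := by
    intro k hk
    rcases Finset.mem_insert.1 hk with rfl | hk
    · exact Finset.mem_filter.2 ⟨Finset.mem_univ _, hij, hval.symm⟩
    · obtain ⟨-, h1, h2⟩ := Finset.mem_filter.1 hk
      exact Finset.mem_filter.2 ⟨Finset.mem_univ _, hij.trans h1, h2.trans hval.symm⟩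
  have hcard := Finset.card_le_card hsub
  have hins := Finset.card_insert_of_notMem hnotmem
  rw [frank, frank]
  omega

theorem frank_inj_fiber (a : Fin n → K) {i j : Fin n} (hval : a i = a j)
    (hfr : frank a i = frank a j) : i = j := by
  rcases lt_trichotomy i j with h | h | h
  · exact absurd hfr (ne_of_gt (frank_anti a h hval))
  · exact h
  · exact absurd hfr (ne_of_lt (frank_anti a h hval.symm))

theorem exists_rank (m : ℕ) : ∀ (S : Finset (Fin n)), m < S.card →
    ∃ i ∈ S, (S.filter (fun j => i < j)).card = m := by
  classical
  induction m with
  | zero =>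
    intro S hS
    have hne : S.Nonempty := Finset.card_pos.1 (by omega)
    refine ⟨S.max' hne, S.max'_mem hne, ?_⟩
    rw [Finset.card_eq_zero, Finset.filter_eq_empty_iff]
    intro j hj
    exact not_lt.2 (S.le_max' j hj)
  | succ m ih =>
    intro S hS
    have hne : S.Nonempty := Finset.card_pos.1 (by omega)
    have hcard : m < (S.erase (S.max' hne)).card := by
      rw [Finset.card_erase_of_mem (S.max'_mem hne)]; omega
    obtain ⟨i, hi, hicard⟩ := ih (S.erase (S.max' hne)) hcard
    have himax : i < S.max' hne :=
      lt_of_le_of_ne (S.le_max' i (Finset.mem_of_mem_erase hi)) (Finset.ne_of_mem_erase hi)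
    refine ⟨i, Finset.mem_of_mem_erase hi, ?_⟩
    have : S.filter (fun j => i < j)
        = insert (S.max' hne) ((S.erase (S.max' hne)).filter (fun j => i < j)) := by
      ext k
      simp only [Finset.mem_filter, Finset.mem_insert, Finset.mem_erase]
      constructor
      · rintro ⟨hk, hik⟩
        rcases eq_or_ne k (S.max' hne) with rfl | hkm
        · exact Or.inl rfl
        · exact Or.inr ⟨⟨hkm, hk⟩, hik⟩
      · rintro (rfl | ⟨⟨-, hk⟩, hik⟩)
        · exact ⟨S.max'_mem hne, himax⟩
        · exact ⟨hk, hik⟩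
    rw [this, Finset.card_insert_of_notMem (by
      intro h
      exact absurd (Finset.mem_of_mem_filter _ h) (Finset.notMem_erase _ _)), hicard]

theorem exists_frank (a : Fin n → K) {v : K} {m : ℕ} (hm : m < multF a v) :
    ∃ i, a i = v ∧ frank a i = m := by
  classical
  obtain ⟨i, hi, hcard⟩ := exists_rank m (Finset.univ.filter (fun j => a j = v)) hm
  have hv : a i = v := (Finset.mem_filter.1 hi).2
  refine ⟨i, hv, ?_⟩
  rw [frank, ← hcard]
  congr 1
  ext j
  simp only [Finset.mem_filter, Finset.mem_univ, true_and, Finset.filter_filter]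
  rw [hv]
  tauto

/-- the count of indices of a given frank equals the count of values with larger multiplicity. -/
theorem card_frank_eq (a : Fin n → K) (m : ℕ) :
    (Finset.univ.filter (fun j : Fin n => frank a j = m)).card
      = ((Finset.univ.image a).filter (fun v => m < multF a v)).card := by
  classical
  apply Finset.card_bij (fun j _ => a j)
  · intro j hj
    have hfr : frank a j = m := (Finset.mem_filter.1 hj).2
    refine Finset.mem_filter.2 ⟨Finset.mem_image_of_mem a (Finset.mem_univ _), ?_⟩
    rw [← hfr]
    exact frank_lt_multF a j
  · intro i hi j hj hij
    have h1 : frank a i = m := (Finset.mem_filter.1 hi).2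
    have h2 : frank a j = m := (Finset.mem_filter.1 hj).2
    exact frank_inj_fiber a hij (h1.trans h2.symm)
  · intro v hv
    obtain ⟨hvi, hvm⟩ := Finset.mem_filter.1 hv
    obtain ⟨i, hiv, hifr⟩ := exists_frank a hvm
    exact ⟨i, Finset.mem_filter.2 ⟨Finset.mem_univ _, hifr⟩, hiv⟩

theorem sum_multF (a : Fin n → K) :
    ∑ v ∈ Finset.univ.image a, multF a v = n := by
  classical
  have h := Finset.card_eq_sum_card_image a (Finset.univ : Finset (Fin n))
  simp only [Finset.card_univ, Fintype.card_fin] at h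
  rw [show ∑ v ∈ Finset.univ.image a, multF a v
      = ∑ v ∈ Finset.univ.image a, (Finset.univ.filter (fun j => a j = v)).card from
    Finset.sum_congr rfl (fun v _ => rfl), ← h]

end Frank

section OrbitType

variable {K : Type*} {n : ℕ}

/-- the list of distinct values of `a`, sorted by decreasing multiplicity. -/
noncomputable def valsList (a : Fin n → K) : List K :=
  ((Finset.univ.image a).toList).mergeSort (fun u v => decide (multF a v ≤ multF a u))

theorem valsList_perm (a : Fin n → K) :
    (valsList a).Perm (Finset.univ.image a).toList :=
  List.mergeSort_perm _ _

theorem mem_valsList {a : Fin n → K} {v : K} :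
    v ∈ valsList a ↔ v ∈ Finset.univ.image a := by
  rw [(valsList_perm a).mem_iff, Finset.mem_toList]

theorem valsList_nodup (a : Fin n → K) : (valsList a).Nodup :=
  ((Finset.nodup_toList _).perm (valsList_perm a).symm)

theorem valsList_sorted (a : Fin n → K) :
    (valsList a).Pairwise (fun u v => multF a v ≤ multF a u) := by
  have h := List.pairwise_mergeSort (le := fun u v => decide (multF a v ≤ multF a u))
    (fun x y z hxy hyz => by
      simp only [decide_eq_true_eq] at hxy hyz ⊢; omega)
    (fun x y => by
      simp only [Bool.or_eq_true, decide_eq_true_eq]; omega)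
    ((Finset.univ.image a).toList)
  refine h.imp ?_
  intro x y hxy
  simpa using hxy

/-- the orbit type of `a` : multiplicities in decreasing order. -/
noncomputable def typeList (a : Fin n → K) : List ℕ := (valsList a).map (multF a)

theorem typeList_length (a : Fin n → K) : (typeList a).length = (valsList a).length :=
  List.length_map _

theorem typeList_sorted (a : Fin n → K) : (typeList a).Pairwise (· ≥ ·) := by
  rw [typeList]
  exact (List.pairwise_map).2 (valsList_sorted a)

theorem typeList_sum (a : Fin n → K) : (typeList a).sum = n := by
  rw [typeList]
  have h1 : ((valsList a).map (multF a)).sum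
      = (((Finset.univ.image a).toList).map (multF a)).sum :=
    ((valsList_perm a).map (multF a)).sum_eq
  rw [h1, Finset.sum_map_toList, sum_multF]

theorem typeList_pos (a : Fin n → K) : ∀ x ∈ typeList a, 0 < x := by
  intro x hx
  rw [typeList, List.mem_map] at hx
  obtain ⟨v, hv, rfl⟩ := hx
  rw [mem_valsList, Finset.mem_image] at hv
  obtain ⟨i, -, rfl⟩ := hv
  exact Finset.card_pos.2 ⟨i, Finset.mem_filter.2 ⟨Finset.mem_univ _, rfl⟩⟩

theorem typeList_isPartition (a : Fin n → K) : IsPartitionList n (typeList a) :=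
  ⟨typeList_sorted a, typeList_pos a, typeList_sum a⟩

theorem hasOrbitType_typeList (a : Fin n → K) : HasOrbitType a (typeList a) := by
  refine ⟨typeList_sorted a, fun j => (valsList a).get (Fin.cast (typeList_length a) j), ?_, ?_, ?_⟩
  · intro u v huv
    have h2 := (List.nodup_iff_injective_get).1 (valsList_nodup a) huv
    exact Fin.ext (by simpa using congrArg Fin.val h2)
  · intro i
    have hmem : a i ∈ valsList a :=
      mem_valsList.2 (Finset.mem_image_of_mem a (Finset.mem_univ _))
    obtain ⟨j, hj⟩ := List.mem_iff_get.1 hmem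
    exact ⟨Fin.cast (typeList_length a).symm j, by
      rw [hj.symm]; congr 1⟩
  · intro j
    rw [mult_eq_multF]
    have h1 : (j : ℕ) < (valsList a).length := (typeList_length a) ▸ j.2
    show multF a ((valsList a).get (Fin.cast (typeList_length a) j)) = (typeList a).get j
    rw [List.get_eq_getElem, List.get_eq_getElem]
    exact (List.getElem_map _).symm

/-- the canonical tableau associated to a point: row = index of the value, column = frank. -/
noncomputable def typeTab (a : Fin n → K) : Fin n → ℕ × ℕ :=
  fun i => ((valsList a).idxOf (a i), frank a i)

theorem indexOf_lt_len (a : Fin n → K) (i : Fin n) :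
    (valsList a).idxOf (a i) < (valsList a).length :=
  List.idxOf_lt_length_iff.2 (mem_valsList.2 (Finset.mem_image_of_mem a (Finset.mem_univ _)))

theorem get_indexOf (a : Fin n → K) (i : Fin n) :
    (valsList a)[(valsList a).idxOf (a i)]'(indexOf_lt_len a i) = a i :=
  List.getElem_idxOf _

theorem indexOf_inj_vals (a : Fin n → K) {i i' : Fin n}
    (h : (valsList a).idxOf (a i) = (valsList a).idxOf (a i')) : a i = a i' := by
  have h1 := get_indexOf a i
  have h2 := get_indexOf a i'
  rw [← h1, ← h2]
  congr 1

theorem typeTab_isTableau (a : Fin n → K) : IsTableau n (typeList a) (typeTab a) := by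
  constructor
  · intro i i' h
    rw [typeTab, typeTab] at h
    have h1 : a i = a i' := indexOf_inj_vals a (congrArg Prod.fst h)
    exact frank_inj_fiber a h1 (congrArg Prod.snd h)
  · intro p
    constructor
    · rintro ⟨i, rfl⟩
      constructor
      · rw [typeTab, typeList_length]
        exact indexOf_lt_len a i
      · rw [typeTab]
        have hlt : (valsList a).idxOf (a i) < (typeList a).length := by
          rw [typeList_length]; exact indexOf_lt_len a i
        have heq : (typeList a).getD ((valsList a).idxOf (a i)) 0
            = multF a (a i) := by
          rw [List.getD_eq_getElem?_getD, List.getElem?_eq_getElem hlt]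
          show ((valsList a).map (multF a))[(valsList a).idxOf (a i)]'hlt = multF a (a i)
          exact (List.getElem_map ..).trans (congrArg (multF a) (get_indexOf a i))
        rw [heq]
        exact frank_lt_multF a i
    · rintro ⟨h1, h2⟩
      rw [typeList_length] at h1
      set w := (valsList a)[p.1]'h1 with hw
      have h1' : p.1 < (typeList a).length := by rw [typeList_length]; exact h1
      have hgd : (typeList a).getD p.1 0 = multF a w := by
        rw [List.getD_eq_getElem?_getD, List.getElem?_eq_getElem h1']
        show ((valsList a).map (multF a))[p.1]'h1' = multF a w
        exact List.getElem_map ..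
      rw [hgd] at h2
      obtain ⟨i, hiv, hif⟩ := exists_frank a h2
      refine ⟨i, ?_⟩
      rw [typeTab, hiv, hif]
      have hidx : (valsList a).idxOf w = p.1 :=
        List.Nodup.idxOf_getElem (valsList_nodup a) p.1 h1
      rw [hidx]

end OrbitType

section SpechtInit

variable {K : Type*} [Field K] {n : ℕ}

/-- the set of ordered pairs indexing the factors of the Specht polynomial of `typeTab a`. -/
noncomputable def pairsT (a : Fin n → K) : Finset (Fin n × Fin n) :=
  Finset.univ.filter
    (fun p : Fin n × Fin n => (typeTab a p.1).2 = (typeTab a p.2).2 ∧ (typeTab a p.1).1 < (typeTab a p.2).1)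

/-- the initial monomial of the Specht polynomial of `typeTab a`. -/
noncomputable def MT (a : Fin n → K) : Fin n →₀ ℕ :=
  ∑ p ∈ pairsT a, Finsupp.single (if p.1 < p.2 then p.1 else p.2) 1

theorem pairsT_ne (a : Fin n → K) {p : Fin n × Fin n} (hp : p ∈ pairsT a) : p.1 ≠ p.2 := by
  obtain ⟨-, -, h2⟩ := Finset.mem_filter.1 hp
  intro h
  rw [h] at h2
  exact lt_irrefl _ h2

theorem initMon_spechtPoly (a : Fin n → K) :
    IsInitialMon' mLt (spechtPoly n K (typeTab a)) (MT a) := by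
  have h := initMon_prod (K := K) (pairsT a) (fun p => X p.1 - X p.2)
    (fun p => Finsupp.single (if p.1 < p.2 then p.1 else p.2) 1)
    (fun p hp => initMon_X_sub (pairsT_ne a hp))
  exact h.1

theorem MT_apply (a : Fin n → K) (i : Fin n) : MT a i = crank a i := by
  classical
  rw [MT]
  rw [show ((∑ p ∈ pairsT a, Finsupp.single (if p.1 < p.2 then p.1 else p.2) 1) i)
      = ∑ p ∈ pairsT a, (Finsupp.single (if p.1 < p.2 then p.1 else p.2) 1) i from
    Finset.sum_apply' i]
  rw [show (∑ p ∈ pairsT a, (Finsupp.single (if p.1 < p.2 then p.1 else p.2) (1:ℕ)) i)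
      = ∑ p ∈ pairsT a, (if (if p.1 < p.2 then p.1 else p.2) = i then 1 else 0) from
    Finset.sum_congr rfl (fun p _ => Finsupp.single_apply)]
  rw [← Finset.card_filter]
  rw [crank]
  symm
  apply Finset.card_bij (fun (j : Fin n) (hj : j ∈ Finset.univ.filter
      (fun j => i < j ∧ frank a j = frank a i)) =>
    if (typeTab a i).1 < (typeTab a j).1 then (i, j) else (j, i))
  · intro j hj
    obtain ⟨-, hij, hfr⟩ := Finset.mem_filter.1 hj
    have hvne : a i ≠ a j := by
      intro hv
      exact (ne_of_gt hij) (frank_inj_fiber a hv.symm hfr)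
    have hrne : (typeTab a i).1 ≠ (typeTab a j).1 := by
      intro hr
      exact hvne (indexOf_inj_vals a hr)
    by_cases hcase : (typeTab a i).1 < (typeTab a j).1
    · rw [if_pos hcase]
      refine Finset.mem_filter.2 ⟨Finset.mem_filter.2 ⟨Finset.mem_univ _, ?_, hcase⟩, ?_⟩
      · show (typeTab a i).2 = (typeTab a j).2
        exact hfr.symm
      · simp only [if_pos hij]
    · rw [if_neg hcase]
      have hlt : (typeTab a j).1 < (typeTab a i).1 :=
        lt_of_le_of_ne (not_lt.1 hcase) (Ne.symm hrne)
      refine Finset.mem_filter.2 ⟨Finset.mem_filter.2 ⟨Finset.mem_univ _, ?_, hlt⟩, ?_⟩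
      · show (typeTab a j).2 = (typeTab a i).2
        exact hfr
      · simp only [if_neg (not_lt.2 (le_of_lt hij))]
  · intro u hu v hv huv
    obtain ⟨-, hiu, -⟩ := Finset.mem_filter.1 hu
    obtain ⟨-, hiv, -⟩ := Finset.mem_filter.1 hv
    by_cases h1 : (typeTab a i).1 < (typeTab a u).1 <;>
      by_cases h2 : (typeTab a i).1 < (typeTab a v).1 <;>
      simp only [if_pos, if_neg, h1, h2, if_true, if_false] at huv
    · exact congrArg Prod.snd huv
    · exfalso; exact (ne_of_gt hiu) (congrArg Prod.snd huv)
    · exfalso; exact (ne_of_gt hiu) (congrArg Prod.fst huv)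
    · exact congrArg Prod.fst huv
  · intro p hp
    obtain ⟨hp', hmin⟩ := Finset.mem_filter.1 hp
    obtain ⟨-, hcol, hrow⟩ := Finset.mem_filter.1 hp'
    by_cases hcase : p.1 < p.2
    · rw [if_pos hcase] at hmin
      refine ⟨p.2, Finset.mem_filter.2 ⟨Finset.mem_univ _, ?_, ?_⟩, ?_⟩
      · rw [← hmin]; exact hcase
      · rw [← hmin]; exact hcol.symm
      · subst hmin
        rw [if_pos hrow]
    · rw [if_neg hcase] at hmin
      have hne : p.1 ≠ p.2 := by
        intro h; rw [h] at hrow; exact lt_irrefl _ hrow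
      have hlt : p.2 < p.1 := lt_of_le_of_ne (not_lt.1 hcase) (Ne.symm hne)
      refine ⟨p.1, Finset.mem_filter.2 ⟨Finset.mem_univ _, ?_, ?_⟩, ?_⟩
      · rw [← hmin]; exact hlt
      · rw [← hmin]; exact hcol
      · subst hmin
        rw [if_neg (not_lt.2 (le_of_lt hrow))]

/-- total degree weight of an exponent vector. -/
noncomputable def wdeg {n : ℕ} (γ : Fin n →₀ ℕ) : ℕ := ∑ i ∈ Finset.univ, γ i

theorem wdeg_add {n : ℕ} (γ δ : Fin n →₀ ℕ) : wdeg (γ + δ) = wdeg γ + wdeg δ := by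
  rw [wdeg, wdeg, wdeg, ← Finset.sum_add_distrib]
  rfl

theorem wdeg_single {n : ℕ} (i : Fin n) (c : ℕ) : wdeg (Finsupp.single i c) = c := by
  rw [wdeg]
  rw [Finset.sum_eq_single i]
  · rw [Finsupp.single_apply, if_pos rfl]
  · intro j _ hj
    rw [Finsupp.single_apply, if_neg (Ne.symm hj)]
  · intro h; exact absurd (Finset.mem_univ _) h

theorem wdeg_sum {n : ℕ} {ι : Type*} (s : Finset ι) (m : ι → (Fin n →₀ ℕ)) :
    wdeg (∑ p ∈ s, m p) = ∑ p ∈ s, wdeg (m p) := by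
  classical
  induction s using Finset.induction_on with
  | empty => simp [wdeg]
  | @insert a s ha ih =>
    rw [Finset.sum_insert ha, Finset.sum_insert ha, wdeg_add, ih]

theorem support_weight_prod {ι : Type*} (s : Finset ι) (g : ι → MvPolynomial (Fin n) K)
    (w : ι → ℕ) (h : ∀ i ∈ s, ∀ δ ∈ (g i).support, wdeg δ = w i) :
    ∀ δ ∈ (∏ i ∈ s, g i).support, wdeg δ = ∑ i ∈ s, w i := by
  classical
  induction s using Finset.induction_on with
  | empty =>
    intro δ hδ
    rw [Finset.prod_empty] at hδ
    rw [MvPolynomial.mem_support_iff, MvPolynomial.coeff_one] at hδ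
    by_cases h0 : δ = 0
    · subst h0; simp [wdeg]
    · rw [if_neg (Ne.symm h0)] at hδ; exact absurd rfl hδ
  | @insert a s ha ih =>
    intro δ hδ
    rw [Finset.prod_insert ha] at hδ
    have hsub := MvPolynomial.support_mul _ _ hδ
    rw [Finset.mem_add] at hsub
    obtain ⟨p, hp, q, hq, rfl⟩ := hsub
    rw [Finset.sum_insert ha, wdeg_add,
      h a (Finset.mem_insert_self _ _) p hp,
      ih (fun i hi => h i (Finset.mem_insert_of_mem hi)) q hq]

theorem support_X_sub {i j : Fin n} (hij : i ≠ j) :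
    ∀ δ ∈ ((X i - X j : MvPolynomial (Fin n) K)).support, wdeg δ = 1 := by
  classical
  intro δ hδ
  have hsub : ((X i - X j : MvPolynomial (Fin n) K)).support
      ⊆ {Finsupp.single i 1, Finsupp.single j 1} := by
    intro γ hγ
    rw [MvPolynomial.mem_support_iff, MvPolynomial.coeff_sub] at hγ
    rw [MvPolynomial.X, MvPolynomial.coeff_monomial, MvPolynomial.X, MvPolynomial.coeff_monomial] at hγ
    by_cases h1 : Finsupp.single i 1 = γ
    · exact Finset.mem_insert.2 (Or.inl h1.symm)
    · by_cases h2 : Finsupp.single j 1 = γ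
      · exact Finset.mem_insert.2 (Or.inr (Finset.mem_singleton.2 h2.symm))
      · rw [if_neg h1, if_neg h2] at hγ; simp at hγ
  rcases Finset.mem_insert.1 (hsub hδ) with h | h
  · rw [h, wdeg_single]
  · rw [Finset.mem_singleton.1 h, wdeg_single]

theorem wdeg_supp_specht (a : Fin n → K) :
    ∀ δ ∈ (spechtPoly n K (typeTab a)).support, wdeg δ = wdeg (MT a) := by
  intro δ hδ
  rw [MT, wdeg_sum]
  rw [show ∑ p ∈ pairsT a, wdeg (Finsupp.single (if p.1 < p.2 then p.1 else p.2) 1)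
      = ∑ p ∈ pairsT a, 1 from Finset.sum_congr rfl (fun p _ => wdeg_single _ _)]
  exact support_weight_prod (pairsT a) _ (fun _ => 1)
    (fun p hp => support_X_sub (pairsT_ne a hp)) δ hδ

end SpechtInit

section ListHelpers

theorem getD_coe (l : List ℕ) (j : Fin l.length) : l.getD (j : ℕ) 0 = l.get j := by
  rw [List.getD_eq_getElem?_getD, List.getElem?_eq_getElem j.2]
  rfl

theorem take_sum_getD (l : List ℕ) (k : ℕ) :
    (l.take k).sum = ∑ r ∈ Finset.range k, l.getD r 0 := by
  induction k with
  | zero => simp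
  | succ k ih =>
    rw [Finset.sum_range_succ, ← ih, List.take_succ, List.sum_append]
    congr 1
    by_cases h : k < l.length
    · rw [List.getElem?_eq_getElem h, List.getD_eq_getElem?_getD, List.getElem?_eq_getElem h]
      simp
    · rw [List.getElem?_eq_none (by omega), List.getD_eq_getElem?_getD,
        List.getElem?_eq_none (by omega)]
      simp

theorem range_filter_lt (len k : ℕ) :
    (Finset.range len).filter (fun r => r < k) = Finset.range (min k len) := by
  ext r
  simp only [Finset.mem_filter, Finset.mem_range]
  omega

theorem take_sum_fin (l : List ℕ) (k : ℕ) :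
    (l.take k).sum
      = ∑ j ∈ Finset.univ.filter (fun j : Fin l.length => (j : ℕ) < k), l.get j := by
  rw [take_sum_getD]
  have h1 : ∑ r ∈ Finset.range k, l.getD r 0
      = ∑ r ∈ (Finset.range k).filter (fun r => r < l.length), l.getD r 0 := by
    symm
    apply Finset.sum_subset (Finset.filter_subset _ _)
    intro x hx hx'
    simp only [Finset.mem_filter, Finset.mem_range, not_and, not_lt] at hx'
    rw [List.getD_eq_getElem?_getD, List.getElem?_eq_none (hx' (Finset.mem_range.1 hx))]
    rfl
  rw [h1]
  have h2 : (Finset.range k).filter (fun r => r < l.length)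
      = (Finset.range l.length).filter (fun r => r < k) := by
    ext r
    simp only [Finset.mem_filter, Finset.mem_range]
    omega
  rw [h2]
  rw [Finset.sum_filter, Finset.sum_filter]
  rw [show (∑ r ∈ Finset.range l.length, if r < k then l.getD r 0 else 0)
      = ∑ j : Fin l.length, (if (j:ℕ) < k then l.getD (j:ℕ) 0 else 0) from
    (Fin.sum_univ_eq_sum_range (fun r => if r < k then l.getD r 0 else 0) l.length).symm]
  apply Finset.sum_congr rfl
  intro j _
  by_cases h : (j : ℕ) < k
  · rw [if_pos h, if_pos h, getD_coe]
  · rw [if_neg h, if_neg h]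

theorem card_fin_filter_lt (len k : ℕ) :
    (Finset.univ.filter (fun j : Fin len => (j : ℕ) < k)).card = min k len := by
  rw [Finset.card_filter]
  rw [Fin.sum_univ_eq_sum_range (fun r => if r < k then 1 else 0) len]
  rw [← Finset.card_filter]
  rw [range_filter_lt, Finset.card_range]

theorem downclosed_eq_range (S : Finset ℕ) (h : ∀ x ∈ S, ∀ y, y < x → y ∈ S) :
    S = Finset.range S.card := by
  have hmem : ∀ x, x ∈ S ↔ x < S.card := by
    intro x
    constructor
    · intro hx
      by_contra hcard
      push_neg at hcard
      have hsub : Finset.range (x + 1) ⊆ S := by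
        intro y hy
        rcases Nat.lt_succ_iff_lt_or_eq.1 (Finset.mem_range.1 hy) with h' | rfl
        · exact h x hx y h'
        · exact hx
      have := Finset.card_le_card hsub
      rw [Finset.card_range] at this
      omega
    · intro hx
      by_contra hxS
      have hsub : S ⊆ Finset.range x := by
        intro y hy
        rw [Finset.mem_range]
        rcases lt_trichotomy y x with h' | rfl | h'
        · exact h'
        · exact absurd hy hxS
        · exact absurd (h y hy x h') hxS
      have := Finset.card_le_card hsub
      rw [Finset.card_range] at this
      omega
  ext x
  rw [hmem, Finset.mem_range]

theorem sorted_getD_anti {l : List ℕ} (hs : l.Pairwise (· ≥ ·)) {r r' : ℕ} (h : r ≤ r') :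
    l.getD r' 0 ≤ l.getD r 0 := by
  by_cases h' : r' < l.length
  · have hr : r < l.length := lt_of_le_of_lt h h'
    rw [List.getD_eq_getElem?_getD, List.getElem?_eq_getElem h',
      List.getD_eq_getElem?_getD, List.getElem?_eq_getElem hr]
    simp only [Option.getD_some]
    rcases eq_or_lt_of_le h with rfl | hlt
    · exact le_refl _
    · exact List.pairwise_iff_getElem.1 hs r r' hr h' hlt
  · rw [List.getD_eq_getElem?_getD (l := l) (i := r'), List.getElem?_eq_none (by omega)]
    simp

end ListHelpers

section EasyDir

variable {K : Type*} [Field K] {n : ℕ}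

theorem dominates_of_colinj {a : Fin n → K} {l μ : List ℕ} {T : Fin n → ℕ × ℕ}
    (hls : l.Pairwise (· ≥ ·)) (hT : IsTableau n l T)
    (hcolinj : ∀ i j : Fin n, i ≠ j → (T i).2 = (T j).2 → a i ≠ a j)
    (hμ : HasOrbitType a μ) : Dominates l μ := by
  classical
  obtain ⟨hμs, al, hαinj, hcov, hαmult⟩ := hμ
  obtain ⟨hTinj, hTrange⟩ := hT
  intro k
  set ρ : Fin n → Fin μ.length := fun i => Classical.choose (hcov i) with hρdef
  have hρspec : ∀ i, a i = al (ρ i) := fun i => Classical.choose_spec (hcov i)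
  set A := Finset.univ.filter (fun i : Fin n => ((ρ i : ℕ) < k)) with hA
  set t := Finset.univ.filter (fun j : Fin μ.length => ((j : ℕ) < k)) with ht
  -- Step 1 : A.card = (μ.take k).sum
  have hstep1 : A.card = (μ.take k).sum := by
    rw [Finset.card_eq_sum_card_fiberwise (f := ρ) (t := t) (by
      intro i hi
      exact Finset.mem_filter.2 ⟨Finset.mem_univ _, (Finset.mem_filter.1 hi).2⟩)]
    rw [take_sum_fin]
    apply Finset.sum_congr rfl
    intro j hj
    have hjk : (j : ℕ) < k := (Finset.mem_filter.1 hj).2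
    have hfib : A.filter (fun i => ρ i = j) = Finset.univ.filter (fun i => a i = al j) := by
      ext i
      simp only [hA, Finset.mem_filter, Finset.filter_filter, Finset.mem_univ, true_and]
      constructor
      · rintro ⟨-, rfl⟩
        exact (hρspec i)
      · intro hv
        have : ρ i = j := hαinj (by rw [← hρspec i, hv])
        exact ⟨by rw [this]; exact hjk, this⟩
    rw [hfib]
    have := hαmult j
    rw [mult_eq_multF] at this
    exact this
  -- Step 2 : A.card ≤ (l.take k).sum
  have hWbound : ∀ i : Fin n, (T i).2 < l.getD 0 0 := by
    intro i
    have hmem : T i ∈ Set.range T := ⟨i, rfl⟩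
    obtain ⟨h1, h2⟩ := (hTrange (T i)).1 hmem
    calc (T i).2 < l.getD (T i).1 0 := h2
    _ ≤ l.getD 0 0 := sorted_getD_anti hls (Nat.zero_le _)
  set W := l.getD 0 0 with hW
  set k' := min k μ.length with hk'
  have hstep2 : A.card ≤ (l.take k).sum := by
    rw [Finset.card_eq_sum_card_fiberwise (f := fun i => (T i).2) (t := Finset.range W) (by
      intro i _
      exact Finset.mem_range.2 (hWbound i))]
    -- per-column bound
    have hcol : ∀ c ∈ Finset.range W,
        (A.filter (fun i => (T i).2 = c)).card
          ≤ ((Finset.range k').filter (fun r => c < l.getD r 0)).card := by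
      intro c _
      set Ac := A.filter (fun i => (T i).2 = c) with hAc
      -- bound 1 : card ≤ k'
      have hb1 : Ac.card ≤ k' := by
        have hinj : Set.InjOn ρ Ac := by
          intro i hi j hj hij
          by_contra hne
          exact hcolinj i j hne (by
            rw [(Finset.mem_filter.1 hi).2, (Finset.mem_filter.1 hj).2]) (by
            rw [hρspec i, hρspec j, hij])
        have hmaps : ∀ i ∈ Ac, ρ i ∈ t := by
          intro i hi
          have := (Finset.mem_filter.1 (Finset.mem_of_mem_filter i hi)).2
          exact Finset.mem_filter.2 ⟨Finset.mem_univ _, this⟩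
        have := Finset.card_le_card_of_injOn ρ hmaps hinj
        rwa [ht, card_fin_filter_lt] at this
      -- bound 2 : card ≤ (column height)
      set Sl := (Finset.range l.length).filter (fun r => c < l.getD r 0) with hSl
      have hb2 : Ac.card ≤ Sl.card := by
        apply Finset.card_le_card_of_injOn (fun i => (T i).1)
        · intro i hi
          have hmem : T i ∈ Set.range T := ⟨i, rfl⟩
          obtain ⟨h1, h2⟩ := (hTrange (T i)).1 hmem
          refine Finset.mem_filter.2 ⟨Finset.mem_range.2 h1, ?_⟩
          rw [← (Finset.mem_filter.1 hi).2]
          exact h2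
        · intro i hi j hj hij
          apply hTinj
          have hc : (T i).2 = (T j).2 := by
            rw [(Finset.mem_filter.1 hi).2, (Finset.mem_filter.1 hj).2]
          exact Prod.ext hij hc
      -- Sl is an initial segment
      have hSlrange : Sl = Finset.range Sl.card := by
        apply downclosed_eq_range
        intro x hx y hy
        obtain ⟨hx1, hx2⟩ := Finset.mem_filter.1 hx
        refine Finset.mem_filter.2 ⟨Finset.mem_range.2 (lt_of_le_of_lt (le_of_lt hy)
          (Finset.mem_range.1 hx1)), ?_⟩
        exact lt_of_lt_of_le hx2 (sorted_getD_anti hls (le_of_lt hy))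
      -- range (min k' Sl.card) ⊆ the k'-filtered set
      have hsub : Finset.range (min k' Sl.card)
          ⊆ (Finset.range k').filter (fun r => c < l.getD r 0) := by
        intro r hr
        have hr' := Finset.mem_range.1 hr
        refine Finset.mem_filter.2 ⟨Finset.mem_range.2 (by omega), ?_⟩
        have : r ∈ Sl := by
          rw [hSlrange]
          exact Finset.mem_range.2 (by omega)
        exact (Finset.mem_filter.1 this).2
      have hcard := Finset.card_le_card hsub
      rw [Finset.card_range] at hcard
      omega
    calc ∑ c ∈ Finset.range W, (A.filter (fun i => (T i).2 = c)).card
        ≤ ∑ c ∈ Finset.range W, ((Finset.range k').filter (fun r => c < l.getD r 0)).card :=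
          Finset.sum_le_sum hcol
      _ = ∑ c ∈ Finset.range W, ∑ r ∈ Finset.range k', (if c < l.getD r 0 then 1 else 0) := by
          apply Finset.sum_congr rfl
          intro c _
          rw [Finset.card_filter]
      _ = ∑ r ∈ Finset.range k', ∑ c ∈ Finset.range W, (if c < l.getD r 0 then 1 else 0) :=
          Finset.sum_comm
      _ = ∑ r ∈ Finset.range k', ((Finset.range W).filter (fun c => c < l.getD r 0)).card := by
          apply Finset.sum_congr rfl
          intro r _
          rw [Finset.card_filter]
      _ = ∑ r ∈ Finset.range k', min (l.getD r 0) W := by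
          apply Finset.sum_congr rfl
          intro r _
          rw [range_filter_lt, Finset.card_range]
      _ = ∑ r ∈ Finset.range k', l.getD r 0 := by
          apply Finset.sum_congr rfl
          intro r _
          have : l.getD r 0 ≤ W := sorted_getD_anti hls (Nat.zero_le _)
          omega
      _ ≤ ∑ r ∈ Finset.range k, l.getD r 0 := by
          apply Finset.sum_le_sum_of_subset
          apply Finset.range_subset_range.2
          omega
      _ = (l.take k).sum := (take_sum_getD l k).symm
  omega

/-- if a Specht polynomial does not vanish at `a`, the values in each column are distinct. -/
theorem colinj_of_eval_ne' {a : Fin n → K} {T : Fin n → ℕ × ℕ} (hTinj : Function.Injective T)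
    (hev : eval a (spechtPoly n K T) ≠ 0) :
    ∀ i j : Fin n, i ≠ j → (T i).2 = (T j).2 → a i ≠ a j := by
  classical
  rw [spechtPoly, map_prod] at hev
  rw [Finset.prod_ne_zero_iff] at hev
  intro i j hne hcol hval
  have hrne : (T i).1 ≠ (T j).1 := by
    intro hr
    exact hne (hTinj (Prod.ext hr hcol))
  rcases lt_or_gt_of_ne hrne with h | h
  · have hmem : (i, j) ∈ Finset.univ.filter
        (fun p : Fin n × Fin n => (T p.1).2 = (T p.2).2 ∧ (T p.1).1 < (T p.2).1) :=
      Finset.mem_filter.2 ⟨Finset.mem_univ _, hcol, h⟩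
    have := hev _ hmem
    simp only [map_sub, eval_X] at this
    exact this (by rw [hval]; exact sub_self _)
  · have hmem : (j, i) ∈ Finset.univ.filter
        (fun p : Fin n × Fin n => (T p.1).2 = (T p.2).2 ∧ (T p.1).1 < (T p.2).1) :=
      Finset.mem_filter.2 ⟨Finset.mem_univ _, hcol.symm, h⟩
    have := hev _ hmem
    simp only [map_sub, eval_X] at this
    exact this (by rw [hval]; exact sub_self _)

end EasyDir

section MainLemma

variable {K : Type*} [Field K]

theorem initMon_head_le {n : ℕ} {f : MvPolynomial (Fin (n + 1)) K} {β : Fin (n+1) →₀ ℕ}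
    (h : IsInitialMon' mLt f β) : ∀ γ ∈ f.support, γ 0 ≤ β 0 := by
  intro γ hγ
  rcases eq_or_ne γ β with rfl | hne
  · exact le_refl _
  · obtain ⟨i, hi, hji⟩ := h.2 γ hγ hne
    rcases eq_or_ne i 0 with rfl | hi0
    · exact le_of_lt hi
    · exact le_of_eq (hji 0 (Fin.pos_iff_ne_zero.2 hi0))

theorem coeff_finSuccEquiv_zero_of_gt {n : ℕ} {f : MvPolynomial (Fin (n + 1)) K}
    {β : Fin (n+1) →₀ ℕ} (h : IsInitialMon' mLt f β) {d : ℕ} (hd : β 0 < d) :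
    (finSuccEquiv K n f).coeff d = 0 := by
  apply MvPolynomial.ext
  intro m
  rw [finSuccEquiv_coeff_coeff, MvPolynomial.coeff_zero]
  by_contra hc
  have hmem : (m.cons d) ∈ f.support := MvPolynomial.mem_support_iff.2 hc
  have := initMon_head_le h _ hmem
  rw [Finsupp.cons_zero] at this
  omega

theorem initMon_tail {n : ℕ} {f : MvPolynomial (Fin (n + 1)) K} {β : Fin (n+1) →₀ ℕ}
    (hβ : IsInitialMon' mLt f β) :
    IsInitialMon' mLt ((finSuccEquiv K n f).coeff (β 0)) β.tail := by
  constructor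
  · rw [MvPolynomial.mem_support_iff, finSuccEquiv_coeff_coeff, Finsupp.cons_tail]
    exact MvPolynomial.mem_support_iff.1 hβ.1
  · intro m' hm' hne
    have hmem : (m'.cons (β 0)) ∈ f.support := mem_support_coeff_finSuccEquiv.1 hm'
    have hneq : m'.cons (β 0) ≠ β := by
      intro h
      apply hne
      rw [← h, Finsupp.tail_cons]
    obtain ⟨i, hi, hji⟩ := hβ.2 _ hmem hneq
    have hi0 : i ≠ 0 := by
      intro h
      subst h
      rw [Finsupp.cons_zero] at hi
      exact lt_irrefl _ hi
    obtain ⟨i', rfl⟩ := Fin.eq_succ_of_ne_zero hi0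
    refine ⟨i', ?_, ?_⟩
    · rw [Finsupp.tail_apply]
      rw [Finsupp.cons_succ] at hi
      exact hi
    · intro j hj
      have := hji j.succ (Fin.succ_lt_succ_iff.2 hj)
      rw [Finsupp.cons_succ] at this
      rw [Finsupp.tail_apply]
      exact this

theorem card_top_values {α : Type*} (s : Finset α) (m : α → ℕ) (D : ℕ) (h : D < s.card) :
    D + 1 ≤ (s.filter (fun w => (s.filter (fun w' => m w < m w')).card ≤ D)).card := by
  classical
  by_cases hB : (s.filter (fun w => D < (s.filter (fun w' => m w < m w')).card)).Nonempty
  · obtain ⟨w₀, hw₀mem, hw₀max⟩ := Finset.exists_max_image _ m hB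
    have hw₀s : w₀ ∈ s := Finset.mem_of_mem_filter _ hw₀mem
    have hw₀ : D < (s.filter (fun w' => m w₀ < m w')).card := (Finset.mem_filter.1 hw₀mem).2
    have hsub : s.filter (fun w' => m w₀ < m w')
        ⊆ s.filter (fun w => (s.filter (fun w' => m w < m w')).card ≤ D) := by
      intro w hw
      obtain ⟨hws, hwm⟩ := Finset.mem_filter.1 hw
      refine Finset.mem_filter.2 ⟨hws, ?_⟩
      by_contra hgt
      push_neg at hgt
      have hwB : w ∈ s.filter (fun w => D < (s.filter (fun w' => m w < m w')).card) :=
        Finset.mem_filter.2 ⟨hws, hgt⟩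
      have := hw₀max w hwB
      omega
    have := Finset.card_le_card hsub
    omega
  · rw [Finset.not_nonempty_iff_eq_empty, Finset.filter_eq_empty_iff] at hB
    have heq : (s.filter (fun w => (s.filter (fun w' => m w < m w')).card ≤ D)) = s := by
      apply Finset.filter_true_of_mem
      intro w hw
      have := hB hw
      omega
    rw [heq]
    omega

theorem main_witness [Infinite K] : ∀ {n : ℕ} (f : MvPolynomial (Fin n) K) (β : Fin n →₀ ℕ),
    IsInitialMon' mLt f β →
    ∃ a : Fin n → K, eval a f ≠ 0 ∧ ∀ i, crank a i ≤ β i := by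
  intro n
  induction n with
  | zero =>
    intro f β hβ
    refine ⟨fun i => i.elim0, ?_, fun i => i.elim0⟩
    have hall : ∀ γ : Fin 0 →₀ ℕ, γ = 0 := fun γ => Finsupp.ext (fun i => i.elim0)
    rw [MvPolynomial.eval_eq]
    have hsupp : f.support = {β} := by
      apply Finset.eq_singleton_iff_unique_mem.2
      exact ⟨hβ.1, fun γ _ => (hall γ).trans (hall β).symm⟩
    rw [hsupp, Finset.sum_singleton]
    have hβ0 : β.support = ∅ := by
      rw [hall β]; rfl
    rw [hβ0, Finset.prod_empty, mul_one]
    exact MvPolynomial.mem_support_iff.1 hβ.1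
  | succ n ih =>
    intro f β hβ
    classical
    set D := β 0 with hD
    set g := (finSuccEquiv K n f).coeff D with hg
    have hgi : IsInitialMon' mLt g β.tail := initMon_tail hβ
    obtain ⟨a', ha'ne, ha'crank⟩ := ih g β.tail hgi
    set φ := Polynomial.map (eval a') (finSuccEquiv K n f) with hφ
    have hφcoeffD : φ.coeff D = eval a' g := by rw [hφ, Polynomial.coeff_map]
    have hφne : φ ≠ 0 := by
      intro h
      apply ha'ne
      rw [← hφcoeffD, h, Polynomial.coeff_zero]
    have hφdeg : φ.natDegree ≤ D := by
      apply Polynomial.natDegree_le_iff_coeff_eq_zero.2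
      intro N hN
      rw [hφ, Polynomial.coeff_map, coeff_finSuccEquiv_zero_of_gt hβ hN, map_zero]
    have heval : ∀ v : K, eval (Fin.cons v a' : Fin (n+1) → K) f = φ.eval v := by
      intro v
      rw [eval_eq_eval_mv_eval']
    have hcranksucc : ∀ (v : K) (i : Fin n), crank (Fin.cons v a') i.succ ≤ β i.succ := by
      intro v i
      rw [crank_cons_succ]
      have := ha'crank i
      rwa [Finsupp.tail_apply] at this
    by_cases hcase : (Finset.univ.image a').card ≤ D
    · -- use a fresh value
      obtain ⟨v, hv⟩ := Infinite.exists_notMem_finset (φ.roots.toFinset ∪ Finset.univ.image a')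
      have hvroot : φ.eval v ≠ 0 := by
        intro h
        exact hv (Finset.mem_union_left _ (Multiset.mem_toFinset.2 (Polynomial.mem_roots'.2 ⟨hφne, h⟩)))
      have hvim : v ∉ Finset.univ.image a' := fun h => hv (Finset.mem_union_right _ h)
      refine ⟨Fin.cons v a', by rw [heval]; exact hvroot, ?_⟩
      intro i
      refine Fin.cases ?_ (fun i => hcranksucc v i) i
      rw [crank_cons_zero]
      have hm0 : multF a' v = 0 := by
        rw [multF, Finset.card_eq_zero, Finset.filter_eq_empty_iff]
        intro j _ hj
        exact hvim (by rw [← hj]; exact Finset.mem_image_of_mem a' (Finset.mem_univ j))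
      rw [hm0, card_frank_eq a' 0]
      calc ((Finset.univ.image a').filter (fun v => 0 < multF a' v)).card
          ≤ (Finset.univ.image a').card := Finset.card_filter_le _ _
        _ ≤ D := hcase
    · -- reuse one of the D+1 most frequent values
      push_neg at hcase
      set A := (Finset.univ.image a').filter
        (fun w => ((Finset.univ.image a').filter
          (fun w' => multF a' w < multF a' w')).card ≤ D) with hA
      have hAcard : D + 1 ≤ A.card := card_top_values _ (multF a') D hcase
      have hex : ∃ w ∈ A, φ.eval w ≠ 0 := by
        by_contra hallz
        push_neg at hallz
        exact hφne (Polynomial.eq_zero_of_natDegree_lt_card_of_eval_eq_zero' φ A hallz (by omega))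
      obtain ⟨w, hwA, hwne⟩ := hex
      refine ⟨Fin.cons w a', by rw [heval]; exact hwne, ?_⟩
      intro i
      refine Fin.cases ?_ (fun i => hcranksucc w i) i
      rw [crank_cons_zero, card_frank_eq a' (multF a' w)]
      exact (Finset.mem_filter.1 hwA).2

end MainLemma

section Assembly

variable {K : Type*} [Field K] {n : ℕ} {F : Set (List ℕ)}

/-- the vanishing condition. -/
def Vani (F : Set (List ℕ)) (f : MvPolynomial (Fin n) K) : Prop :=
  ∀ a : Fin n → K, (∃ μ, IsPartitionList n μ ∧ μ ∉ F ∧ HasOrbitType a μ) → eval a f = 0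

theorem vani_generator (hF : IsLowerFilter n F) {l : List ℕ} (hl : l ∈ F)
    {T : Fin n → ℕ × ℕ} (hT : IsTableau n l T) :
    Vani F (spechtPoly n K T) := by
  intro a ⟨μ, hμpart, hμnF, hμtype⟩
  by_contra hev
  have hcolinj := colinj_of_eval_ne' hT.1 hev
  have hdom := dominates_of_colinj ((hF.1 l hl).1) hT hcolinj hμtype
  exact hμnF (hF.2 l μ hμpart hl hdom)

theorem easy_dir (hF : IsLowerFilter n F) {f : MvPolynomial (Fin n) K}
    (hf : f ∈ spechtIdealFilter n K F) : Vani F f := by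
  rw [spechtIdealFilter] at hf
  refine Submodule.span_induction (p := fun g _ => Vani F g) ?_ ?_ ?_ ?_ hf
  · rintro x ⟨l, hl, T, hT, rfl⟩
    exact vani_generator hF hl hT
  · intro a _
    simp
  · intro x y _ _ hx hy
    intro a ha
    rw [map_add, hx a ha, hy a ha, add_zero]
  · intro c x _ hx
    intro a ha
    rw [smul_eq_mul, map_mul, hx a ha, mul_zero]

theorem vani_sub {f g : MvPolynomial (Fin n) K} (hf : Vani F f) (hg : Vani F g) :
    Vani F (f - g) := by
  intro a ha
  rw [map_sub, hf a ha, hg a ha, sub_zero]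

theorem hard_aux [Infinite K] (hF : IsLowerFilter n F) (D₀ : ℕ) (b : Fin n →₀ ℕ)
    (hb : ∀ i, b i = D₀) :
    ∀ (N : ℕ) (f : MvPolynomial (Fin n) K) (β : Fin n →₀ ℕ),
      IsInitialMon' mLt f β →
      (∀ γ ∈ f.support, wdeg γ ≤ D₀) → Vani F f →
      ((Finset.Iic b).filter (fun γ => γ = β ∨ mLt γ β)).card ≤ N →
      f ∈ spechtIdealFilter n K F := by
  have hIic : ∀ γ : Fin n →₀ ℕ, wdeg γ ≤ D₀ → γ ∈ Finset.Iic b := by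
    intro γ hγ
    rw [Finset.mem_Iic, Finsupp.le_def]
    intro i
    rw [hb i]
    calc γ i ≤ ∑ j ∈ Finset.univ, γ j :=
      Finset.single_le_sum (fun j _ => Nat.zero_le _) (Finset.mem_univ i)
    _ = wdeg γ := rfl
    _ ≤ D₀ := hγ
  intro N
  induction N with
  | zero =>
    intro f β hβ hwt _ hN
    exfalso
    have hβb : β ∈ (Finset.Iic b).filter (fun γ => γ = β ∨ mLt γ β) :=
      Finset.mem_filter.2 ⟨hIic β (hwt β hβ.1), Or.inl rfl⟩
    have := Finset.card_pos.2 ⟨β, hβb⟩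
    omega
  | succ N ihN =>
    intro f β hβ hwt hvani hN
    classical
    -- the witness point and its orbit type
    obtain ⟨a, hane, hacrank⟩ := main_witness f β hβ
    have hμF : typeList a ∈ F := by
      by_contra hnF
      exact hane (hvani a ⟨typeList a, typeList_isPartition a, hnF, hasOrbitType_typeList a⟩)
    -- the Specht polynomial to subtract
    set sp := spechtPoly n K (typeTab a) with hsp
    have hspi : IsInitialMon' mLt sp (MT a) := initMon_spechtPoly a
    have hMle : MT a ≤ β := by
      rw [Finsupp.le_def]
      intro i
      rw [MT_apply]
      exact hacrank i
    have hMadd : (β - MT a) + MT a = β := tsub_add_cancel_of_le hMle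
    have hcoefsp : MvPolynomial.coeff (MT a) sp ≠ 0 := MvPolynomial.mem_support_iff.1 hspi.1
    have hcoeff : MvPolynomial.coeff β f ≠ 0 := MvPolynomial.mem_support_iff.1 hβ.1
    set c := MvPolynomial.coeff β f * (MvPolynomial.coeff (MT a) sp)⁻¹ with hc
    have hcne : c ≠ 0 := mul_ne_zero hcoeff (inv_ne_zero hcoefsp)
    set mono := MvPolynomial.monomial (β - MT a) c with hmono
    set sub := mono * sp with hsub
    have hsubinit : IsInitialMon' mLt sub β ∧ MvPolynomial.coeff β sub
        = c * MvPolynomial.coeff (MT a) sp := by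
      have h := initMon_mul (m := β - MT a) (m' := MT a) (initMon_monomial hcne) hspi
      rw [hMadd] at h
      refine ⟨h.1, ?_⟩
      rw [h.2, MvPolynomial.coeff_monomial, if_pos rfl]
    have hsubcoeff : MvPolynomial.coeff β sub = MvPolynomial.coeff β f := by
      rw [hsubinit.2, hc, mul_assoc, inv_mul_cancel₀ hcoefsp, mul_one]
    set f' := f - sub with hf'
    have hf'coeff : MvPolynomial.coeff β f' = 0 := by
      rw [hf', MvPolynomial.coeff_sub, hsubcoeff, sub_self]
    have hf'supp : ∀ γ ∈ f'.support, mLt γ β := by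
      intro γ hγ
      have hγβ : γ ≠ β := by
        intro h
        rw [h] at hγ
        exact (MvPolynomial.mem_support_iff.1 hγ) hf'coeff
      have := MvPolynomial.support_sub _ f sub hγ
      rcases Finset.mem_union.1 this with h | h
      · exact hβ.2 γ h hγβ
      · exact hsubinit.1.2 γ h hγβ
    have hsubwt : ∀ γ ∈ sub.support, wdeg γ ≤ D₀ := by
      intro γ hγ
      have hsubsup := MvPolynomial.support_mul _ _ hγ
      rw [Finset.mem_add] at hsubsup
      obtain ⟨p, hp, q, hq, rfl⟩ := hsubsup
      have hpmem : p = β - MT a := by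
        rw [hmono, MvPolynomial.support_monomial, if_neg hcne] at hp
        exact Finset.mem_singleton.1 hp
      subst hpmem
      rw [wdeg_add, wdeg_supp_specht a q hq, ← wdeg_add, hMadd]
      exact hwt β hβ.1
    have hf'wt : ∀ γ ∈ f'.support, wdeg γ ≤ D₀ := by
      intro γ hγ
      rcases Finset.mem_union.1 (MvPolynomial.support_sub _ f sub hγ) with h | h
      · exact hwt γ h
      · exact hsubwt γ h
    -- sub is in the ideal and vanishes
    have hspmem : sp ∈ spechtIdealFilter n K F := by
      rw [spechtIdealFilter]
      exact Ideal.subset_span ⟨typeList a, hμF, typeTab a, typeTab_isTableau a, rfl⟩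
    have hsubmem : sub ∈ spechtIdealFilter n K F := Ideal.mul_mem_left _ mono hspmem
    have hsubvani : Vani F sub := by
      intro a' ha'
      rw [hsub, map_mul]
      have : eval a' sp = 0 := vani_generator hF hμF (typeTab_isTableau a) a' ha'
      rw [this, mul_zero]
    have hf'vani : Vani F f' := vani_sub hvani hsubvani
    -- finish by induction
    rcases eq_or_ne f' 0 with h0 | hne'
    · have : f = sub := by
        have : f - sub = 0 := h0
        linear_combination this
      rw [this]
      exact hsubmem
    · obtain ⟨β', hβ'⟩ := exists_initMon hne'
      have hβ'lt : mLt β' β := hf'supp β' hβ'.1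
      have hcard : ((Finset.Iic b).filter (fun γ => γ = β' ∨ mLt γ β')).card ≤ N := by
        have hsubset : (Finset.Iic b).filter (fun γ => γ = β' ∨ mLt γ β')
            ⊆ ((Finset.Iic b).filter (fun γ => γ = β ∨ mLt γ β)).erase β := by
          intro γ hγ
          obtain ⟨hγb, hγor⟩ := Finset.mem_filter.1 hγ
          have hγβ : mLt γ β := by
            rcases hγor with rfl | h
            · exact hβ'lt
            · exact mLt_trans h hβ'lt
          refine Finset.mem_erase.2 ⟨?_, Finset.mem_filter.2 ⟨hγb, Or.inr hγβ⟩⟩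
          intro h
          subst h
          exact mLt_irrefl γ hγβ
        have h1 := Finset.card_le_card hsubset
        have hβmem : β ∈ (Finset.Iic b).filter (fun γ => γ = β ∨ mLt γ β) :=
          Finset.mem_filter.2 ⟨hIic β (hwt β hβ.1), Or.inl rfl⟩
        have h2 := Finset.card_erase_of_mem hβmem
        omega
      have hf'mem := ihN f' β' hβ' hf'wt hf'vani hcard
      have : f = f' + sub := by
        rw [hf']
        ring
      rw [this]
      exact Ideal.add_mem _ hf'mem hsubmem

theorem hard_dir [Infinite K] (hF : IsLowerFilter n F) {f : MvPolynomial (Fin n) K}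
    (hvani : Vani F f) : f ∈ spechtIdealFilter n K F := by
  classical
  rcases eq_or_ne f 0 with rfl | hne
  · exact Ideal.zero_mem _
  obtain ⟨β, hβ⟩ := exists_initMon hne
  set D₀ := f.totalDegree with hD₀
  have hwt : ∀ γ ∈ f.support, wdeg γ ≤ D₀ := by
    intro γ hγ
    have h := MvPolynomial.le_totalDegree hγ
    have heq : (γ.sum fun _ e => e) = wdeg γ :=
      Finsupp.sum_fintype _ _ (fun _ => rfl)
    rw [heq] at h
    exact h
  set b : Fin n →₀ ℕ := Finsupp.equivFunOnFinite.symm (fun _ => D₀) with hbdef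
  have hb : ∀ i, b i = D₀ := by
    intro i
    rw [hbdef]
    rfl
  exact hard_aux hF D₀ b hb _ f β hβ hwt hvani (le_refl _)

end Assembly

theorem spechtIdealFilter_eq_vanishing' {K : Type*} [Field K] [Infinite K] {n : ℕ}
    {F : Set (List ℕ)} (hF : IsLowerFilter n F) (hne : F.Nonempty) :
    (∀ f : MvPolynomial (Fin n) K,
      f ∈ spechtIdealFilter n K F ↔
        ∀ a : Fin n → K,
          (∃ μ, IsPartitionList n μ ∧ μ ∉ F ∧ HasOrbitType a μ) → eval a f = 0) ∧
    (spechtIdealFilter n K F).IsRadical := by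
  have hiff : ∀ f : MvPolynomial (Fin n) K,
      f ∈ spechtIdealFilter n K F ↔ Vani F f :=
    fun f => ⟨easy_dir hF, hard_dir hF⟩
  constructor
  · exact hiff
  · intro x hx
    obtain ⟨m, hm⟩ := Ideal.mem_radical_iff.1 hx
    rw [hiff]
    intro a ha
    have := (hiff (x ^ m)).1 hm a ha
    rw [map_pow] at this
    rcases Nat.eq_zero_or_pos m with rfl | hmpos
    · exfalso
      rw [pow_zero] at this
      exact one_ne_zero this
    · exact pow_eq_zero_iff (by omega) |>.1 this

end SpechtAux


/-- `I_F = J_{P_n ∖ F}` for any nonempty lower filter `F`; in particular `I_F`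
is a radical ideal. -/
theorem spechtIdealFilter_eq_vanishing {K : Type*} [Field K] [Infinite K] {n : ℕ}
    {F : Set (List ℕ)} (hF : IsLowerFilter n F) (hne : F.Nonempty) :
    (∀ f : MvPolynomial (Fin n) K,
      f ∈ spechtIdealFilter n K F ↔
        ∀ a : Fin n → K,
          (∃ μ, IsPartitionList n μ ∧ μ ∉ F ∧ HasOrbitType a μ) → eval a f = 0) ∧
    (spechtIdealFilter n K F).IsRadical := by
  exact SpechtAux.spechtIdealFilter_eq_vanishing' hF hne
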